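/- For λ, ν set partitions of {1,...,n} with ν > λ in the order where dimv(ν) >_lex dimv(λ) (dimv is the multiset of arc lengths sorted decreasingly), the coefficient Σ_{μ ⊆ ν} χ^λ_μ (−1)^{|ν−μ|} q^{−nst(ν−μ,ν)} equals 0. -/

import Mathlib

open scoped Classical
open Finset

noncomputable section

/-- A set partition of `{1,…,n}` encoded as a set of arcs `(i,j)` with `1 ≤ i < j ≤ n`,
no two distinct arcs sharing a left endpoint or a right endpoint. -/
def IsSP (n : ℕ) (lam : Finset (ℕ × ℕ)) : Prop :=
  (∀ a ∈ lam, 1 ≤ a.1 ∧ a.1 < a.2 ∧ a.2 ≤ n) ∧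
  (∀ a ∈ lam, ∀ b ∈ lam, a ≠ b → a.1 ≠ b.1 ∧ a.2 ≠ b.2)

/-- `nstF A B = #{(i,j,k,l) : i<j<k<l, (i,l) ∈ B, (j,k) ∈ A}`. -/
def nstF (A B : Finset (ℕ × ℕ)) : ℕ :=
  ((B ×ˢ A).filter fun p => p.1.1 < p.2.1 ∧ p.2.1 < p.2.2 ∧ p.2.2 < p.1.2).card

/-- `dimF λ = Σ_{(i,l)∈λ} (l-i)`. -/
def dimF (lam : Finset (ℕ × ℕ)) : ℕ := ∑ a ∈ lam, (a.2 - a.1)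

/-- Supercharacter value `χ^λ_μ`. -/
def chiF {K : Type*} [Field K] (q : K) (lam mu : Finset (ℕ × ℕ)) : K :=
  if ∀ i j k : ℕ, i < j → j < k → (i, k) ∈ lam → (i, j) ∉ mu ∧ (j, k) ∉ mu then
    (q - 1) ^ (lam.card - (lam ∩ mu).card) * q ^ (dimF lam - lam.card) *
      (-1 : K) ^ ((lam ∩ mu).card) * (q ^ nstF mu lam)⁻¹
  else 0

/-- `(j,k)` conflicts with `λ`: some arc of `λ` shares an endpoint with it and strictly contains it. -/
def cfltP (lam : Finset (ℕ × ℕ)) (a : ℕ × ℕ) : Prop :=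
  ∃ b ∈ lam, (b.1 = a.1 ∧ a.1 < a.2 ∧ a.2 < b.2) ∨ (b.1 < a.1 ∧ a.1 < a.2 ∧ a.2 = b.2)

/-- Strictly nested pairs: inner arc of `ν` not conflicting with `λ`, nested in an arc of `λ`. -/
def snstF (nu lam : Finset (ℕ × ℕ)) : ℕ :=
  ((lam ×ˢ nu).filter fun p =>
    p.1.1 < p.2.1 ∧ p.2.1 < p.2.2 ∧ p.2.2 < p.1.2 ∧ ¬ cfltP lam p.2).card

/-- Multiset of arc lengths, sorted decreasingly. -/
def dimv (lam : Finset (ℕ × ℕ)) : List ℕ :=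
  ((lam.val.map fun a => a.2 - a.1).sort (· ≤ ·)).reverse

/-- All set partitions of `{1,…,n}` as arc sets. -/
def allSP (n : ℕ) : Finset (Finset (ℕ × ℕ)) :=
  ((Finset.Icc 1 n ×ˢ Finset.Icc 1 n).powerset).filter (IsSP n)

/-! ### Auxiliary definitions -/

def lenF (a : ℕ × ℕ) : ℕ := a.2 - a.1

def nbF (B : Finset (ℕ × ℕ)) (a : ℕ × ℕ) : ℕ :=
  (B.filter fun b => b.1 < a.1 ∧ a.1 < a.2 ∧ a.2 < b.2).card

lemma nstF_eq_sum (A B : Finset (ℕ × ℕ)) : nstF A B = ∑ x ∈ A, nbF B x := by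
  unfold nstF nbF
  rw [Finset.card_filter, Finset.sum_product]
  rw [Finset.sum_comm]
  refine Finset.sum_congr rfl fun x hx => ?_
  rw [Finset.card_filter]

lemma nstF_insert {A : Finset (ℕ × ℕ)} (B : Finset (ℕ × ℕ)) {a : ℕ × ℕ} (ha : a ∉ A) :
    nstF (insert a A) B = nbF B a + nstF A B := by
  rw [nstF_eq_sum, nstF_eq_sum, Finset.sum_insert ha]

/-! ### Lex/count lemma -/

lemma lex_count {l1 l2 : List ℕ} (h1 : l1.Pairwise (· ≥ ·)) (h2 : l2.Pairwise (· ≥ ·))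
    (h : List.Lex (· < ·) l1 l2) :
    ∃ L : ℕ, (∀ K, L ≤ K → l1.countP (fun x => K < x) = l2.countP (fun x => K < x)) ∧
      l1.countP (fun x => L ≤ x) < l2.countP (fun x => L ≤ x) := by
  induction h with
  | nil =>
    rename_i y t2
    have ht2 : ∀ z ∈ t2, z ≤ y := fun z hz => List.rel_of_pairwise_cons h2 hz
    refine ⟨y, fun K hK => ?_, ?_⟩
    · rw [List.countP_nil, eq_comm, List.countP_eq_zero]
      intro z hz
      rcases List.mem_cons.1 hz with rfl | hz
      · simp; omega
      · have := ht2 z hz; simp; omega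
    · rw [List.countP_nil, List.countP_pos_iff]
      exact ⟨y, List.mem_cons_self, by simp⟩
  | @cons a t1 t2 hlex ih =>
    obtain ⟨L, hEq, hLt⟩ := ih (List.Pairwise.of_cons h1) (List.Pairwise.of_cons h2)
    refine ⟨L, fun K hK => ?_, ?_⟩
    · rw [List.countP_cons, List.countP_cons, hEq K hK]
    · rw [List.countP_cons, List.countP_cons]
      omega
  | @rel x t1 y t2 hxy =>
    have ht1 : ∀ z ∈ t1, z ≤ x := fun z hz => List.rel_of_pairwise_cons h1 hz
    have ht2 : ∀ z ∈ t2, z ≤ y := fun z hz => List.rel_of_pairwise_cons h2 hz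
    refine ⟨y, fun K hK => ?_, ?_⟩
    · rw [List.countP_eq_zero.2, List.countP_eq_zero.2]
      · intro z hz
        rcases List.mem_cons.1 hz with rfl | hz
        · simp; omega
        · have := ht2 z hz; simp; omega
      · intro z hz
        rcases List.mem_cons.1 hz with rfl | hz
        · simp; omega
        · have := ht1 z hz; simp; omega
    · rw [List.countP_eq_zero.2, List.countP_pos_iff]
      · exact ⟨y, List.mem_cons_self, by simp⟩
      · intro z hz
        rcases List.mem_cons.1 hz with rfl | hz
        · simp; omega
        · have := ht1 z hz; simp; omega

/-! ### Bridge: countP on dimv vs Finset cards -/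

lemma dimv_sorted (X : Finset (ℕ × ℕ)) : (dimv X).Pairwise (· ≥ ·) := by
  unfold dimv
  rw [List.pairwise_reverse]
  have := Multiset.pairwise_sort (X.val.map fun a => a.2 - a.1) (· ≤ ·)
  exact this

lemma dimv_countP (X : Finset (ℕ × ℕ)) (P : ℕ → Prop) [DecidablePred P] :
    (dimv X).countP (fun x => decide (P x)) = (X.filter (fun b => P (lenF b))).card := by
  unfold dimv
  rw [List.countP_eq_length_filter, List.filter_reverse, List.length_reverse,
    ← List.countP_eq_length_filter]
  have : (Multiset.sort (X.val.map fun a => a.2 - a.1) (· ≤ ·) : List ℕ).countP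
      (fun x => decide (P x)) = Multiset.countP P (X.val.map fun a => a.2 - a.1) := by
    conv_rhs => rw [← Multiset.sort_eq (X.val.map fun a => a.2 - a.1) (· ≤ ·)]
    rw [Multiset.coe_countP]
  rw [this, Multiset.countP_map]
  rfl

/-! ### Existence of the cancelling arc -/

lemma exists_witness {n : ℕ} {lam nu : Finset (ℕ × ℕ)}
    (hlam : IsSP n lam) (hnu : IsSP n nu)
    (hgt : List.Lex (· < ·) (dimv lam) (dimv nu)) :
    ∃ a ∈ nu, a ∉ lam ∧ ¬ cfltP lam a ∧ nbF lam a = nbF nu a := by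
  obtain ⟨L, hEq, hLt⟩ := lex_count (dimv_sorted lam) (dimv_sorted nu) hgt
  -- translate counts to Finset cards
  have hEq' : ∀ K, L ≤ K →
      (lam.filter fun b => K < lenF b).card = (nu.filter fun b => K < lenF b).card := by
    intro K hK
    have := hEq K hK
    rwa [dimv_countP lam (fun x => K < x), dimv_countP nu (fun x => K < x)] at this
  have hLt' : (lam.filter fun b => L ≤ lenF b).card < (nu.filter fun b => L ≤ lenF b).card := by
    have := hLt
    rwa [dimv_countP lam (fun x => L ≤ x), dimv_countP nu (fun x => L ≤ x)] at this
  -- the candidate set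
  set C : Finset (ℕ × ℕ) := nu.filter (fun b => L ≤ lenF b ∧ b ∉ lam) with hC
  have hCne : C.Nonempty := by
    by_contra hne
    rw [Finset.not_nonempty_iff_eq_empty] at hne
    have hsub : nu.filter (fun b => L ≤ lenF b) ⊆ lam.filter (fun b => L ≤ lenF b) := by
      intro b hb
      rw [Finset.mem_filter] at hb ⊢
      by_cases hbl : b ∈ lam
      · exact ⟨hbl, hb.2⟩
      · exfalso
        have : b ∈ C := by rw [hC, Finset.mem_filter]; exact ⟨hb.1, hb.2, hbl⟩
        rw [hne] at this; exact absurd this (Finset.notMem_empty b)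
    have := Finset.card_le_card hsub
    omega
  obtain ⟨a, haC, hamax⟩ := Finset.exists_max_image C lenF hCne
  rw [hC, Finset.mem_filter] at haC
  obtain ⟨hanu, haL, halam⟩ := haC
  set M := lenF a with hM
  -- all arcs of length > M agree between lam and nu
  have hsub : nu.filter (fun b => M < lenF b) ⊆ lam.filter (fun b => M < lenF b) := by
    intro b hb
    rw [Finset.mem_filter] at hb ⊢
    refine ⟨?_, hb.2⟩
    by_contra hbl
    have hbC : b ∈ C := by
      rw [hC, Finset.mem_filter]
      exact ⟨hb.1, by omega, hbl⟩
    have := hamax b hbC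
    omega
  have hcard : (lam.filter fun b => M < lenF b).card = (nu.filter fun b => M < lenF b).card :=
    hEq' M haL
  have hfeq : lam.filter (fun b => M < lenF b) = nu.filter (fun b => M < lenF b) :=
    (Finset.eq_of_subset_of_card_le hsub (le_of_eq hcard)).symm
  have key : ∀ b : ℕ × ℕ, M < lenF b → (b ∈ lam ↔ b ∈ nu) := by
    intro b hb
    constructor
    · intro h
      have : b ∈ lam.filter (fun b => M < lenF b) := Finset.mem_filter.2 ⟨h, hb⟩
      rw [hfeq] at this
      exact (Finset.mem_filter.1 this).1
    · intro h
      have : b ∈ nu.filter (fun b => M < lenF b) := Finset.mem_filter.2 ⟨h, hb⟩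
      rw [← hfeq] at this
      exact (Finset.mem_filter.1 this).1
  refine ⟨a, hanu, halam, ?_, ?_⟩
  · -- no conflict
    rintro ⟨b, hb, hcase⟩
    have hblen : M < lenF b := by
      rcases hcase with ⟨h1, h2, h3⟩ | ⟨h1, h2, h3⟩
      · simp only [hM, lenF]; omega
      · simp only [hM, lenF]; omega
    have hbnu : b ∈ nu := (key b hblen).1 hb
    have hne : a ≠ b := fun h => halam (h ▸ hb)
    have := hnu.2 a hanu b hbnu hne
    rcases hcase with ⟨h1, _, _⟩ | ⟨_, _, h3⟩
    · exact this.1 h1.symm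
    · exact this.2 h3
  · -- equal nesting numbers
    unfold nbF
    congr 1
    ext b
    rw [Finset.mem_filter, Finset.mem_filter]
    constructor
    · rintro ⟨hb, hcond⟩
      refine ⟨(key b ?_).1 hb, hcond⟩
      obtain ⟨h1, h2, h3⟩ := hcond
      simp only [hM, lenF]; omega
    · rintro ⟨hb, hcond⟩
      refine ⟨(key b ?_).2 hb, hcond⟩
      obtain ⟨h1, h2, h3⟩ := hcond
      simp only [hM, lenF]; omega

/-! ### Pair cancellation -/

lemma chi_cond_insert {lam mu : Finset (ℕ × ℕ)} {a : ℕ × ℕ} (hcf : ¬ cfltP lam a) :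
    (∀ i j k : ℕ, i < j → j < k → (i, k) ∈ lam → (i, j) ∉ insert a mu ∧ (j, k) ∉ insert a mu)
      ↔ (∀ i j k : ℕ, i < j → j < k → (i, k) ∈ lam → (i, j) ∉ mu ∧ (j, k) ∉ mu) := by
  constructor
  · intro h i j k hij hjk hik
    obtain ⟨h1, h2⟩ := h i j k hij hjk hik
    exact ⟨fun hm => h1 (Finset.mem_insert_of_mem hm), fun hm => h2 (Finset.mem_insert_of_mem hm)⟩
  · intro h i j k hij hjk hik
    obtain ⟨h1, h2⟩ := h i j k hij hjk hik
    constructor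
    · intro hm
      rcases Finset.mem_insert.1 hm with rfl | hm
      · exact hcf ⟨(i, k), hik, Or.inl ⟨rfl, hij, hjk⟩⟩
      · exact h1 hm
    · intro hm
      rcases Finset.mem_insert.1 hm with rfl | hm
      · exact hcf ⟨(i, k), hik, Or.inr ⟨hij, hjk, rfl⟩⟩
      · exact h2 hm

lemma pair_cancel (q : ℚ) (lam nu mu : Finset (ℕ × ℕ)) (a : ℕ × ℕ)
    (ha : a ∈ nu) (halam : a ∉ lam) (hcf : ¬ cfltP lam a) (hnb : nbF lam a = nbF nu a)
    (hmu : mu ⊆ nu.erase a) :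
    chiF q lam mu * (-1 : ℚ) ^ ((nu \ mu).card) * (q ^ nstF (nu \ mu) nu)⁻¹
    + chiF q lam (insert a mu) * (-1 : ℚ) ^ ((nu \ insert a mu).card)
        * (q ^ nstF (nu \ insert a mu) nu)⁻¹ = 0 := by
  have hamu : a ∉ mu := fun h => Finset.notMem_erase a nu (hmu h)
  have hand : a ∈ nu \ mu := Finset.mem_sdiff.2 ⟨ha, hamu⟩
  have hsd : nu \ insert a mu = (nu \ mu).erase a := Finset.sdiff_insert nu mu a
  have hins : insert a (nu \ insert a mu) = nu \ mu := by
    rw [hsd, Finset.insert_erase hand]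
  have hane : a ∉ nu \ insert a mu := by
    rw [hsd]; exact Finset.notMem_erase a _
  have hcard : (nu \ mu).card = (nu \ insert a mu).card + 1 := by
    rw [← hins, Finset.card_insert_of_notMem hane]
  have hnst1 : nstF (nu \ mu) nu = nbF nu a + nstF (nu \ insert a mu) nu := by
    rw [← hins, nstF_insert nu hane]
  have hnst2 : nstF (insert a mu) lam = nbF lam a + nstF mu lam := nstF_insert lam hamu
  have hint : lam ∩ insert a mu = lam ∩ mu := Finset.inter_insert_of_notMem halam
  unfold chiF
  rw [chi_cond_insert hcf]
  by_cases hcond : ∀ i j k : ℕ, i < j → j < k → (i, k) ∈ lam → (i, j) ∉ mu ∧ (j, k) ∉ mu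
  · rw [if_pos hcond, if_pos hcond, hint, hcard, hnst1, hnst2, hnb]
    rw [pow_succ, pow_add (q) (nbF nu a), pow_add (q) (nbF nu a), mul_inv, mul_inv]
    ring
  · rw [if_neg hcond, if_neg hcond]
    ring


/-- If `ν > λ` in the decreasing-lexicographic order on arc-length multisets, then the
coefficient of `ρ_ν` in `χ^λ` vanishes. -/
theorem stmt_7 (n : ℕ) (q : ℚ) (hq : 0 < q) (lam nu : Finset (ℕ × ℕ))
    (hlam : IsSP n lam) (hnu : IsSP n nu)
    (hgt : List.Lex (· < ·) (dimv lam) (dimv nu)) :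
    ∑ mu ∈ nu.powerset,
      chiF q lam mu * (-1 : ℚ) ^ ((nu \ mu).card) * (q ^ nstF (nu \ mu) nu)⁻¹ = 0 := by
  obtain ⟨a, ha, halam, hcf, hnb⟩ := exists_witness hlam hnu hgt
  have hsplit : ∑ mu ∈ nu.powerset,
      chiF q lam mu * (-1 : ℚ) ^ ((nu \ mu).card) * (q ^ nstF (nu \ mu) nu)⁻¹
    = ∑ mu ∈ (nu.erase a).powerset,
        chiF q lam mu * (-1 : ℚ) ^ ((nu \ mu).card) * (q ^ nstF (nu \ mu) nu)⁻¹
      + ∑ mu ∈ (nu.erase a).powerset,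
          chiF q lam (insert a mu) * (-1 : ℚ) ^ ((nu \ insert a mu).card)
            * (q ^ nstF (nu \ insert a mu) nu)⁻¹ := by
    conv_lhs => rw [show nu.powerset = (insert a (nu.erase a)).powerset by
      rw [Finset.insert_erase ha]]
    exact Finset.sum_powerset_insert (Finset.notMem_erase a nu) _
  rw [hsplit, ← Finset.sum_add_distrib]
  refine Finset.sum_eq_zero fun mu hmu => ?_
  exact pair_cancel q lam nu mu a ha halam hcf hnb (Finset.mem_powerset.1 hmu)
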